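/- Let (c_j)_{j≥1} be a non-increasing sequence of positive real numbers with Σ_{j≥1} c_j³ < ∞ and Σ_{j≥1} c_j² = ∞, and let (ξ_j)_{j≥1} be independent random variables where ξ_j is exponentially distributed with rate c_j. Then for every pair of reals 0 ≤ r < s, almost surely Σ_{j≥1} c_j 1{r ≤ ξ_j ≤ s} = ∞. -/

import Mathlib

open MeasureTheory

lemma aux_exp_lb {x : ℝ} (h0 : 0 ≤ x) (h1 : x ≤ 1) : x / 2 ≤ 1 - Real.exp (-x) := by
  have h := Real.add_one_le_exp x
  have hp : (0:ℝ) < 1 + x := by linarith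
  have h2 : Real.exp (-x) ≤ 1 / (1 + x) := by
    rw [Real.exp_neg, inv_eq_one_div]
    apply one_div_le_one_div_of_le (by positivity) (by linarith)
  have h3 : 1 / (1 + x) ≤ 1 - x / 2 := by
    rw [div_le_iff₀ hp]; nlinarith
  linarith

lemma aux_prod_integral {Ω : Type*} [MeasurableSpace Ω] (μ : Measure Ω) [IsProbabilityMeasure μ]
    (h : ℕ → Ω → ℝ) (hm : ∀ j, Measurable (h j)) (hp : ∀ j ω, 0 ≤ h j ω)
    (hi : ProbabilityTheory.iIndepFun h μ) (n : ℕ) :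
    ∫ ω, ∏ j ∈ Finset.range n, h j ω ∂μ = ∏ j ∈ Finset.range n, ∫ ω, h j ω ∂μ := by
  induction n with
  | zero => simp
  | succ n ih =>
    have hXfun : (∏ j ∈ Finset.range n, h j) = fun ω => ∏ j ∈ Finset.range n, h j ω :=
      funext fun ω => Finset.prod_apply ω (Finset.range n) h
    have hXm : Measurable (∏ j ∈ Finset.range n, h j) := by
      rw [hXfun]; exact Finset.measurable_prod _ fun i _ => hm i
    have hXp : 0 ≤ (∏ j ∈ Finset.range n, h j) := by
      rw [hXfun]; intro ω; exact Finset.prod_nonneg fun i _ => hp i ω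
    have key := ProbabilityTheory.IndepFun.integral_mul_eq_mul_integral
      (hi.indepFun_prod_range_succ hm n) hXm.aestronglyMeasurable (hm n).aestronglyMeasurable
    have e1 : (fun ω => ∏ j ∈ Finset.range (n+1), h j ω)
        = (∏ j ∈ Finset.range n, h j) * h n := by
      funext ω
      simp [Finset.prod_range_succ, hXfun]
    calc ∫ ω, ∏ j ∈ Finset.range (n+1), h j ω ∂μ
        = ∫ ω, ((∏ j ∈ Finset.range n, h j) * h n) ω ∂μ := by rw [← e1]
      _ = (∫ ω, (∏ j ∈ Finset.range n, h j) ω ∂μ) * ∫ ω, h n ω ∂μ := key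
      _ = (∏ j ∈ Finset.range n, ∫ ω, h j ω ∂μ) * ∫ ω, h n ω ∂μ := by
          rw [hXfun]; rw [ih]
      _ = ∏ j ∈ Finset.range (n+1), ∫ ω, h j ω ∂μ := (Finset.prod_range_succ _ n).symm

lemma aux_key {Ω : Type*} [MeasurableSpace Ω] (μ : Measure Ω) [IsProbabilityMeasure μ]
    (f : ℕ → Ω → ℝ) (hm : ∀ j, Measurable (f j)) (hp : ∀ j ω, 0 ≤ f j ω)
    (hi : ProbabilityTheory.iIndepFun f μ)
    (hdiv : Filter.Tendsto (fun n => ∏ j ∈ Finset.range n, ∫ ω, Real.exp (-(f j ω)) ∂μ)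
      Filter.atTop (nhds 0)) :
    ∀ᵐ ω ∂μ, (∑' j, ENNReal.ofReal (f j ω)) = ⊤ := by
  have hhm : ∀ j, Measurable (fun ω => Real.exp (-(f j ω))) :=
    fun j => Real.measurable_exp.comp (hm j).neg
  have hhp : ∀ j ω, 0 ≤ Real.exp (-(f j ω)) := fun j ω => (Real.exp_pos _).le
  have hhi : ProbabilityTheory.iIndepFun
      (fun j ω => Real.exp (-(f j ω))) μ :=
    hi.comp (fun _ x => Real.exp (-x)) fun _ => Real.measurable_exp.comp measurable_neg
  have hS_meas : ∀ n, Measurable (fun ω => ∑ j ∈ Finset.range n, f j ω) :=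
    fun n => Finset.measurable_sum _ fun i _ => hm i
  -- integral identity
  have hI : ∀ n, ∫ ω, Real.exp (-(∑ j ∈ Finset.range n, f j ω)) ∂μ
      = ∏ j ∈ Finset.range n, ∫ ω, Real.exp (-(f j ω)) ∂μ := by
    intro n
    have e : (fun ω => Real.exp (-(∑ j ∈ Finset.range n, f j ω)))
        = fun ω => ∏ j ∈ Finset.range n, Real.exp (-(f j ω)) := by
      funext ω
      rw [← Finset.sum_neg_distrib, Real.exp_sum]
    rw [e]
    exact aux_prod_integral μ _ hhm hhp hhi n
  -- integrability
  have hInt : ∀ n, Integrable (fun ω => Real.exp (-(∑ j ∈ Finset.range n, f j ω))) μ := by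
    intro n
    apply Integrable.mono' (integrable_const (1:ℝ))
      (Real.measurable_exp.comp (hS_meas n).neg).aestronglyMeasurable
    refine Filter.Eventually.of_forall fun ω => ?_
    simp only [Function.comp_apply, Real.norm_eq_abs, abs_of_pos (Real.exp_pos _)]
    exact Real.exp_le_one_iff.mpr (by
      apply neg_nonpos.mpr
      exact Finset.sum_nonneg fun i _ => hp i ω)
  -- the bad sets
  set B : ℕ → Set Ω := fun M => ⋂ n, {ω | ∑ j ∈ Finset.range n, f j ω ≤ (M:ℝ)} with hB
  have hB_meas : ∀ M, MeasurableSet (B M) := fun M =>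
    MeasurableSet.iInter fun n => measurableSet_le (hS_meas n) measurable_const
  have hB_zero : ∀ M, μ (B M) = 0 := by
    intro M
    have key : ∀ n, Real.exp (-(M:ℝ)) * (μ (B M)).toReal
        ≤ ∏ j ∈ Finset.range n, ∫ ω, Real.exp (-(f j ω)) ∂μ := by
      intro n
      have h1 : Real.exp (-(M:ℝ)) * (μ (B M)).toReal
          ≤ ∫ ω in B M, Real.exp (-(∑ j ∈ Finset.range n, f j ω)) ∂μ := by
        have hc : ∫ _ω in B M, Real.exp (-(M:ℝ)) ∂μ = Real.exp (-(M:ℝ)) * (μ (B M)).toReal := by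
          rw [setIntegral_const, smul_eq_mul, mul_comm, measureReal_def]
        rw [← hc]
        apply setIntegral_mono_on ((integrableOn_const (measure_ne_top _ _)))
          ((hInt n).integrableOn) (hB_meas M)
        intro ω hω
        have hle : ∑ j ∈ Finset.range n, f j ω ≤ (M:ℝ) := by
          have := Set.mem_iInter.mp hω n
          exact this
        exact Real.exp_le_exp.mpr (by linarith)
      have h2 : ∫ ω in B M, Real.exp (-(∑ j ∈ Finset.range n, f j ω)) ∂μ
          ≤ ∫ ω, Real.exp (-(∑ j ∈ Finset.range n, f j ω)) ∂μ :=
        setIntegral_le_integral (hInt n) (Filter.Eventually.of_forall fun ω => (Real.exp_pos _).le)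
      calc Real.exp (-(M:ℝ)) * (μ (B M)).toReal ≤ _ := h1
        _ ≤ _ := h2
        _ = _ := hI n
    have hle0 : Real.exp (-(M:ℝ)) * (μ (B M)).toReal ≤ 0 :=
      ge_of_tendsto hdiv (Filter.Eventually.of_forall key)
    have ht0 : (μ (B M)).toReal = 0 := by
      have h1 : (0:ℝ) ≤ (μ (B M)).toReal := ENNReal.toReal_nonneg
      nlinarith [Real.exp_pos (-(M:ℝ))]
    rcases (ENNReal.toReal_eq_zero_iff _).mp ht0 with h | h
    · exact h
    · exact absurd h (measure_ne_top μ _)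
  -- conclusion
  rw [MeasureTheory.ae_iff]
  refine measure_mono_null ?_ (measure_iUnion_null fun M => hB_zero M)
  · intro ω hω
    simp only [Set.mem_setOf_eq] at hω
    have hT : (∑' j, ENNReal.ofReal (f j ω)) ≠ ⊤ := hω
    refine Set.mem_iUnion.mpr ⟨⌈(∑' j, ENNReal.ofReal (f j ω)).toReal⌉₊,
      Set.mem_iInter.mpr fun n => ?_⟩
    have h1 : ENNReal.ofReal (∑ j ∈ Finset.range n, f j ω) ≤ ∑' j, ENNReal.ofReal (f j ω) := by
      rw [ENNReal.ofReal_sum_of_nonneg fun i _ => hp i ω]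
      exact ENNReal.sum_le_tsum _
    have h2 := (ENNReal.ofReal_le_iff_le_toReal hT).mp h1
    exact Set.mem_setOf_eq ▸ h2.trans (Nat.le_ceil _)
theorem stmt7 (c : ℕ → ℝ) (hc_pos : ∀ j, 0 < c j) (hc_anti : Antitone c)
    (hc3 : Summable fun j => (c j) ^ 3) (hc2 : ¬ Summable fun j => (c j) ^ 2)
    {Ω : Type*} [MeasurableSpace Ω] (μ : Measure Ω) [IsProbabilityMeasure μ]
    (ξ : ℕ → Ω → ℝ) (hmeas : ∀ j, Measurable (ξ j))
    (hindep : ProbabilityTheory.iIndepFun ξ μ)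
    (hdist : ∀ j, ∀ t : ℝ, 0 ≤ t →
      μ {ω | ξ j ω ≤ t} = ENNReal.ofReal (1 - Real.exp (-(c j) * t))) :
    ∀ r s : ℝ, 0 ≤ r → r < s →
      ∀ᵐ ω ∂μ, (∑' j, ENNReal.ofReal (if ξ j ω ∈ Set.Icc r s then c j else 0)) = ⊤ := by
  intro r s hr hrs
  have hs : (0:ℝ) ≤ s := hr.trans hrs.le
  have hsr : (0:ℝ) < s - r := by linarith
  -- the summands
  have hf_meas : ∀ j, Measurable (fun ω => if ξ j ω ∈ Set.Icc r s then c j else 0) :=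
    fun j => Measurable.ite ((hmeas j) measurableSet_Icc) measurable_const measurable_const
  have hf_nonneg : ∀ (j : ℕ) (ω : Ω), 0 ≤ (if ξ j ω ∈ Set.Icc r s then c j else 0) := by
    intro j ω
    split
    · exact (hc_pos j).le
    · exact le_refl 0
  have hf_indep : ProbabilityTheory.iIndepFun
      (fun j ω => if ξ j ω ∈ Set.Icc r s then c j else 0) μ :=
    hindep.comp (fun j x => if x ∈ Set.Icc r s then c j else 0)
      fun j => Measurable.ite measurableSet_Icc measurable_const measurable_const
  -- events and their probabilities
  have hA_meas : ∀ j, MeasurableSet (ξ j ⁻¹' Set.Icc r s) := fun j => (hmeas j) measurableSet_Icc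
  set q : ℕ → ℝ := fun j => (μ (ξ j ⁻¹' Set.Icc r s)).toReal with hq_def
  have hq_nonneg : ∀ j, 0 ≤ q j := fun j => ENNReal.toReal_nonneg
  have hq_le_one : ∀ j, q j ≤ 1 := by
    intro j
    have h := ENNReal.toReal_mono (by simp) (prob_le_one (μ := μ) (s := ξ j ⁻¹' Set.Icc r s))
    simpa using h
  set b : ℕ → ℝ := fun j => (1 - Real.exp (-(c j))) * q j with hb_def
  have ha_nonneg : ∀ j, 0 ≤ 1 - Real.exp (-(c j)) := by
    intro j
    have : Real.exp (-(c j)) ≤ 1 := Real.exp_le_one_iff.mpr (by linarith [hc_pos j])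
    linarith
  have ha_le_one : ∀ j, 1 - Real.exp (-(c j)) ≤ 1 := by
    intro j; linarith [Real.exp_pos (-(c j))]
  have hb_nonneg : ∀ j, 0 ≤ b j := fun j => mul_nonneg (ha_nonneg j) (hq_nonneg j)
  have hb_le_one : ∀ j, b j ≤ 1 := by
    intro j
    calc b j ≤ 1 * 1 := mul_le_mul (ha_le_one j) (hq_le_one j) (hq_nonneg j) one_pos.le
      _ = 1 := one_mul 1
  -- per-index integral
  have hint : ∀ j, ∫ ω, Real.exp (-(if ξ j ω ∈ Set.Icc r s then c j else 0)) ∂μ = 1 - b j := by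
    intro j
    have heq : (fun ω => Real.exp (-(if ξ j ω ∈ Set.Icc r s then c j else 0)))
        = fun ω => (ξ j ⁻¹' Set.Icc r s).indicator (fun _ => Real.exp (-(c j)) - 1) ω + 1 := by
      funext ω
      by_cases hω : ξ j ω ∈ Set.Icc r s
      · rw [if_pos hω, Set.indicator_of_mem (show ω ∈ ξ j ⁻¹' Set.Icc r s from hω)]
        ring
      · rw [if_neg hω, Set.indicator_of_notMem (show ω ∉ ξ j ⁻¹' Set.Icc r s from hω)]
        simp
    rw [heq, integral_add ((integrable_const _).indicator (hA_meas j)) (integrable_const 1),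
      integral_indicator_const _ (hA_meas j), integral_const]
    simp only [measureReal_def, measure_univ, ENNReal.toReal_one, smul_eq_mul, one_smul, hb_def, hq_def]
    ring
  -- lower bound for q
  have hq_lb : ∀ j, Real.exp (-(c j) * r) - Real.exp (-(c j) * s) ≤ q j := by
    intro j
    have hsub : {ω | ξ j ω ≤ s} ⊆ {ω | ξ j ω ≤ r} ∪ ξ j ⁻¹' Set.Icc r s := by
      intro ω hω
      simp only [Set.mem_setOf_eq] at hω
      by_cases h' : ξ j ω ≤ r
      · exact Or.inl h'
      · exact Or.inr (Set.mem_preimage.mpr (Set.mem_Icc.mpr ⟨(not_le.mp h').le, hω⟩))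
    have h1 : μ {ω | ξ j ω ≤ s} ≤ μ {ω | ξ j ω ≤ r} + μ (ξ j ⁻¹' Set.Icc r s) :=
      (measure_mono hsub).trans (measure_union_le _ _)
    rw [hdist j s hs, hdist j r hr] at h1
    have h2 := ENNReal.toReal_mono
      (by exact ENNReal.add_ne_top.mpr ⟨ENNReal.ofReal_ne_top, measure_ne_top μ _⟩) h1
    rw [ENNReal.toReal_add ENNReal.ofReal_ne_top (measure_ne_top μ _),
      ENNReal.toReal_ofReal (by
        have : Real.exp (-(c j) * s) ≤ 1 :=
          Real.exp_le_one_iff.mpr (by nlinarith [hc_pos j])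
        linarith),
      ENNReal.toReal_ofReal (by
        have : Real.exp (-(c j) * r) ≤ 1 :=
          Real.exp_le_one_iff.mpr (by nlinarith [hc_pos j])
        linarith)] at h2
    simp only [hq_def]
    linarith
  -- eventual smallness of c
  have hcsmall : ∃ N : ℕ, ∀ j, N ≤ j → c j < min 1 (s - r)⁻¹ := by
    have hmpos : (0:ℝ) < min 1 (s - r)⁻¹ := lt_min one_pos (by positivity)
    have h1 : ∀ᶠ j in Filter.atTop, (c j) ^ 3 < (min 1 (s - r)⁻¹) ^ 3 :=
      hc3.tendsto_atTop_zero.eventually_lt_const (by positivity)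
    have h2 : ∀ᶠ j in Filter.atTop, c j < min 1 (s - r)⁻¹ := by
      filter_upwards [h1] with j hj
      by_contra hcon
      exact absurd (pow_le_pow_left₀ hmpos.le (not_lt.mp hcon) 3) (not_le.mpr hj)
    exact Filter.eventually_atTop.mp h2
  obtain ⟨N, hN⟩ := hcsmall
  -- quadratic lower bound for b
  set K : ℝ := Real.exp (-r) * (s - r) / 4 with hK_def
  have hK_pos : 0 < K := by
    simp only [hK_def]
    positivity
  have hb_lb : ∀ j, N ≤ j → K * (c j) ^ 2 ≤ b j := by
    intro j hj
    have hc1 : c j ≤ 1 := ((hN j hj).trans_le (min_le_left _ _)).le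
    have hc2' : c j * (s - r) ≤ 1 := by
      have h := ((hN j hj).trans_le (min_le_right _ _)).le
      calc c j * (s - r) ≤ (s - r)⁻¹ * (s - r) := by nlinarith
        _ = 1 := inv_mul_cancel₀ hsr.ne'
    have hcp := (hc_pos j).le
    -- a j ≥ c j / 2
    have ha_lb : c j / 2 ≤ 1 - Real.exp (-(c j)) := aux_exp_lb hcp hc1
    -- q j ≥ exp(-r) * (c j * (s - r) / 2)
    have hd1 : Real.exp (-(c j) * r) - Real.exp (-(c j) * s)
        = Real.exp (-(c j * r)) * (1 - Real.exp (-(c j * (s - r)))) := by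
      have e1 : -(c j) * s = -(c j * r) + -(c j * (s - r)) := by ring
      have e2 : -(c j) * r = -(c j * r) := by ring
      rw [e1, e2, Real.exp_add]
      ring
    have hd2 : Real.exp (-r) ≤ Real.exp (-(c j * r)) := by
      apply Real.exp_le_exp.mpr
      nlinarith
    have hd3 : c j * (s - r) / 2 ≤ 1 - Real.exp (-(c j * (s - r))) :=
      aux_exp_lb (by positivity) hc2'
    have hq_lb2 : Real.exp (-r) * (c j * (s - r) / 2) ≤ q j := by
      have h1 : Real.exp (-r) * (c j * (s - r) / 2)
          ≤ Real.exp (-(c j * r)) * (1 - Real.exp (-(c j * (s - r)))) := by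
        apply mul_le_mul hd2 hd3 (by positivity) (Real.exp_pos _).le
      calc Real.exp (-r) * (c j * (s - r) / 2) ≤ _ := h1
        _ = Real.exp (-(c j) * r) - Real.exp (-(c j) * s) := hd1.symm
        _ ≤ q j := hq_lb j
    calc K * (c j) ^ 2 = (c j / 2) * (Real.exp (-r) * (c j * (s - r) / 2)) := by
          simp only [hK_def]; ring
      _ ≤ (1 - Real.exp (-(c j))) * q j :=
          mul_le_mul ha_lb hq_lb2 (by positivity) (ha_nonneg j)
      _ = b j := rfl
  -- b is not summable
  have hb_not_summable : ¬ Summable b := by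
    intro hsum
    have h1 : Summable (fun j => b (j + N)) := (summable_nat_add_iff N).mpr hsum
    have h2 : Summable (fun j => K * (c (j + N)) ^ 2) :=
      h1.of_nonneg_of_le (fun j => by positivity)
        (fun j => hb_lb (j + N) (Nat.le_add_left N j))
    have h3 : Summable (fun j => (c (j + N)) ^ 2) := by
      have := h2.div_const K
      simpa [mul_div_cancel_left₀ _ hK_pos.ne'] using this
    exact hc2 ((summable_nat_add_iff N).mp h3)
  -- partial sums of b tend to infinity
  have hbsum : Filter.Tendsto (fun n => ∑ j ∈ Finset.range n, b j) Filter.atTop Filter.atTop :=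
    (not_summable_iff_tendsto_nat_atTop_of_nonneg hb_nonneg).mp hb_not_summable
  -- product tends to 0
  have hdiv : Filter.Tendsto
      (fun n => ∏ j ∈ Finset.range n, ∫ ω, Real.exp (-(if ξ j ω ∈ Set.Icc r s then c j else 0)) ∂μ)
      Filter.atTop (nhds 0) := by
    have heq : ∀ n, ∏ j ∈ Finset.range n,
        ∫ ω, Real.exp (-(if ξ j ω ∈ Set.Icc r s then c j else 0)) ∂μ
        = ∏ j ∈ Finset.range n, (1 - b j) := by
      intro n
      exact Finset.prod_congr rfl fun j _ => hint j
    have hub : ∀ n, ∏ j ∈ Finset.range n, (1 - b j)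
        ≤ Real.exp (-(∑ j ∈ Finset.range n, b j)) := by
      intro n
      rw [← Finset.sum_neg_distrib, Real.exp_sum]
      apply Finset.prod_le_prod (fun j _ => by linarith [hb_le_one j])
      intro j _
      have := Real.add_one_le_exp (-(b j))
      linarith
    have hlb : ∀ n, 0 ≤ ∏ j ∈ Finset.range n, (1 - b j) :=
      fun n => Finset.prod_nonneg fun j _ => by linarith [hb_le_one j]
    have htend : Filter.Tendsto (fun n => Real.exp (-(∑ j ∈ Finset.range n, b j)))
        Filter.atTop (nhds 0) :=
      Real.tendsto_exp_neg_atTop_nhds_zero.comp hbsum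
    have h0 : Filter.Tendsto (fun n => ∏ j ∈ Finset.range n, (1 - b j))
        Filter.atTop (nhds 0) :=
      squeeze_zero hlb hub htend
    simp only [heq]
    exact h0
  exact aux_key μ _ hf_meas hf_nonneg hf_indep hdiv
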